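/- Assume condition S1. Then the BDF2 kernels are positive semi-definite: for every 1 ≤ n ≤ N and every real sequence w_1, …, w_n, Σ_{k=1}^n w_k · Σ_{j=1}^k b^{(k)}_{k−j} w_j ≥ 0. -/

import Mathlib

open Finset

/-- BDF2 convolution kernels `b^{(n)}_j` built from the step sizes `τ`. -/
noncomputable def bdf2 (τ : ℕ → ℝ) (n j : ℕ) : ℝ :=
  if n = 1 then (if j = 0 then 1 / τ 1 else 0)
  else if j = 0 then (1 + 2 * (τ n / τ (n - 1))) / (τ n * (1 + τ n / τ (n - 1)))
  else if j = 1 then -(τ n / τ (n - 1)) ^ 2 / (τ n * (1 + τ n / τ (n - 1)))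
  else 0

/-- DOC kernels: `doc τ n g = θ^{(n)}_g`, defined by the recursive procedure
`θ^{(n)}_0 = 1/b^{(n)}_0`, `θ^{(n)}_{n-k} = -(1/b^{(k)}_0) ∑_{j=k+1}^n θ^{(n)}_{n-j} b^{(j)}_{j-k}`. -/
noncomputable def doc (τ : ℕ → ℝ) (n : ℕ) : ℕ → ℝ
  | 0 => 1 / bdf2 τ n 0
  | (g + 1) =>
    -(1 / bdf2 τ (n - (g + 1)) 0) *
      ∑ i ∈ (Finset.range (g + 1)).attach,
        doc τ n i.1 * bdf2 τ (n - i.1) (g + 1 - i.1)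
  decreasing_by exact Finset.mem_range.mp i.2

/-- The variable-step BDF2 formula `D_2 v^n = ∑_{k=1}^n b^{(n)}_{n-k} (v^k - v^{k-1})`. -/
noncomputable def D2 {V : Type*} [AddCommGroup V] [Module ℝ V]
    (τ : ℕ → ℝ) (v : ℕ → V) (n : ℕ) : V :=
  ∑ k ∈ Finset.Icc 1 n, bdf2 τ n (n - k) • (v k - v (k - 1))

/-- Time levels `t_n = τ_1 + ⋯ + τ_n`. -/
noncomputable def tlv (τ : ℕ → ℝ) (n : ℕ) : ℝ := ∑ i ∈ Finset.Icc 1 n, τ i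

/-- The inner convolution sum for `k ≥ 2` has only two nonzero terms. -/
lemma bdf2_inner_eq (τ : ℕ → ℝ) (w : ℕ → ℝ) (k : ℕ) (hk : 2 ≤ k) :
    ∑ j ∈ Finset.Icc 1 k, bdf2 τ k (k - j) * w j =
      bdf2 τ k 0 * w k + bdf2 τ k 1 * w (k - 1) := by
  obtain ⟨m, rfl⟩ : ∃ m, k = m + 2 := ⟨k - 2, by omega⟩
  rw [show m + 2 = (m + 1) + 1 from rfl, Finset.sum_Icc_succ_top (by omega),
    Finset.sum_Icc_succ_top (by omega)]
  have hz : ∑ j ∈ Finset.Icc 1 m, bdf2 τ (m + 1 + 1) (m + 1 + 1 - j) * w j = 0 := by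
    apply Finset.sum_eq_zero
    intro j hj
    have hj' := Finset.mem_Icc.mp hj
    have h2 : 2 ≤ m + 1 + 1 - j := by omega
    unfold bdf2
    rw [if_neg (by omega), if_neg (by omega), if_neg (by omega)]
    ring
  rw [hz]
  have e1 : m + 1 + 1 - (m + 1) = 1 := by omega
  have e2 : m + 1 + 1 - (m + 1 + 1) = 0 := by omega
  have e3 : m + 1 + 1 - 1 = m + 1 := by omega
  rw [e1, e2, e3]
  ring

/-- The key per-step inequality (Young's inequality plus the step-ratio bound). -/
lemma bdf2_key (σ r a b : ℝ) (hσ : 0 < σ) (hr : 0 < r) (h36 : r ≤ 18 / 5) :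
    5 / 8 * a ^ 2 / (r * σ) - 5 / 8 * b ^ 2 / σ ≤
      a * ((1 + 2 * r) / (r * σ * (1 + r)) * a + -(r ^ 2) / (r * σ * (1 + r)) * b) := by
  rw [← sub_nonneg]
  have h1 : (0 : ℝ) < 1 + r := by linarith
  have key : a * ((1 + 2 * r) / (r * σ * (1 + r)) * a + -(r ^ 2) / (r * σ * (1 + r)) * b) -
      (5 / 8 * a ^ 2 / (r * σ) - 5 / 8 * b ^ 2 / σ) =
      ((3 + 11 * r) * a ^ 2 - 8 * r ^ 2 * a * b + 5 * r * (1 + r) * b ^ 2) /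
        (8 * (r * σ * (1 + r))) := by
    field_simp
    ring
  rw [key]
  apply div_nonneg _ (by positivity)
  nlinarith [sq_nonneg (r * (4 * a - 5 * b)), mul_nonneg (mul_nonneg hr.le (by linarith : (0:ℝ) ≤ 18 / 5 - r)) (sq_nonneg a), mul_nonneg hr.le (sq_nonneg b), sq_nonneg a]

/-- positive semi-definiteness of the BDF2 kernels under condition S1. -/
theorem bdf2_kernels_posSemidef
    (N : ℕ) (τ : ℕ → ℝ)
    (hτ : ∀ k, 1 ≤ k → k ≤ N → 0 < τ k)
    (hS1 : ∀ k, 2 ≤ k → k ≤ N →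
      0 < τ k / τ (k - 1) ∧ τ k / τ (k - 1) ≤ (3 + Real.sqrt 17) / 2) :
    ∀ n, 1 ≤ n → n ≤ N → ∀ w : ℕ → ℝ,
      0 ≤ ∑ k ∈ Finset.Icc 1 n, w k * ∑ j ∈ Finset.Icc 1 k, bdf2 τ k (k - j) * w j := by
  intro n hn1 hnN w
  have hsqrt : Real.sqrt 17 ≤ 21 / 5 := by
    rw [show (21 : ℝ) / 5 = Real.sqrt ((21 / 5) ^ 2) from (Real.sqrt_sq (by norm_num)).symm]
    exact Real.sqrt_le_sqrt (by norm_num)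
  -- main induction claim
  have main : ∀ m, 1 ≤ m → m ≤ n →
      5 / 8 * (w m) ^ 2 / τ m ≤
        ∑ k ∈ Finset.Icc 1 m, w k * ∑ j ∈ Finset.Icc 1 k, bdf2 τ k (k - j) * w j := by
    intro m hm1
    induction m with
    | zero => omega
    | succ m ih =>
      intro hmn
      rcases Nat.eq_or_lt_of_le hm1 with h1 | h1
      · -- base case m + 1 = 1
        have hm0 : m = 0 := by omega
        subst hm0
        have hτ1 : 0 < τ 1 := hτ 1 le_rfl (by omega)
        simp only [zero_add, Finset.Icc_self, Finset.sum_singleton]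
        have hb : bdf2 τ 1 (1 - 1) = 1 / τ 1 := by unfold bdf2; norm_num
        rw [hb]
        have h0 : 0 ≤ (w 1) ^ 2 / τ 1 := div_nonneg (sq_nonneg _) hτ1.le
        have he : w 1 * (1 / τ 1 * w 1) = (w 1) ^ 2 / τ 1 := by ring
        rw [he]
        have he2 : 5 / 8 * w 1 ^ 2 / τ 1 = 5 / 8 * ((w 1) ^ 2 / τ 1) := by ring
        rw [he2]
        linarith
    -- inductive step: m + 1 ≥ 2
      · have hm1' : 1 ≤ m := by omega
        have hmn' : m ≤ n := by omega
        have ihm := ih hm1' hmn'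
        have hk2 : 2 ≤ m + 1 := by omega
        have hkN : m + 1 ≤ N := by omega
        have hτm : 0 < τ m := hτ m hm1' (by omega)
        have hτm1 : 0 < τ (m + 1) := hτ (m + 1) (by omega) hkN
        obtain ⟨hrpos, hrle⟩ := hS1 (m + 1) hk2 hkN
        set r : ℝ := τ (m + 1) / τ m with hrdef
        have hre : τ (m + 1) / τ (m + 1 - 1) = r := by norm_num [hrdef]
        have hr36 : r ≤ 18 / 5 := by
          have : τ (m + 1) / τ (m + 1 - 1) ≤ (3 + Real.sqrt 17) / 2 := hrle
          rw [hre] at this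
          linarith
        have hrpos' : 0 < r := by rwa [hre] at hrpos
        have hτeq : τ (m + 1) = r * τ m := by
          rw [hrdef, div_mul_cancel₀ _ hτm.ne']
        rw [Finset.sum_Icc_succ_top (by omega)]
        rw [bdf2_inner_eq τ w (m + 1) hk2]
        have hb0 : bdf2 τ (m + 1) 0 = (1 + 2 * r) / (r * τ m * (1 + r)) := by
          unfold bdf2
          rw [if_neg (by omega), if_pos rfl, hre, ← hτeq]
        have hb1 : bdf2 τ (m + 1) 1 = -(r ^ 2) / (r * τ m * (1 + r)) := by
          unfold bdf2
          rw [if_neg (by omega), if_neg (by omega), if_pos rfl, hre, ← hτeq]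
        rw [hb0, hb1]
        have hkey := bdf2_key (τ m) r (w (m + 1)) (w m) hτm hrpos' hr36
        have hsimp : (m + 1 : ℕ) - 1 = m := by omega
        rw [hsimp]
        rw [hτeq]
        linarith
  have hfin := main n hn1 (le_refl n)
  have hτn : 0 < τ n := hτ n hn1 hnN
  have : 0 ≤ 5 / 8 * (w n) ^ 2 / τ n := by positivity
  linarith
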